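/- Let 0 < t₀ ≤ ∞ and let p : (0,t₀) → (0,∞) be decreasing with ∫₀^{t₀} (1 + u²) p(u) du < ∞. Let σ be a Borel measure on (0,∞) with ∫₀^∞ (r² ∧ 1) σ(dr) < ∞. Define ℓ̃(u) = ∫_{(u/t₀, ∞)} p(u/r) r^{-1} σ(dr) for u > 0 (with u/t₀ interpreted as 0 when t₀ = ∞). Then ℓ̃ is decreasing on (0,∞), and for every s > 0, ∫₀^{t₀} p(t) σ((s/t, ∞)) dt = ∫_s^∞ ℓ̃(u) du. -/

import Mathlib

open MeasureTheory
open scoped ENNReal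

/-- The radial computation: for a decreasing kernel `p` on `(0,t₀)` with
`∫₀^{t₀} (1+u²)p(u) du < ∞` and a radial Lévy measure `σ` on `(0,∞)`, the function
`ℓ̃(u) = ∫_{(u/t₀,∞)} p(u/r) r⁻¹ σ(dr)` is decreasing on `(0,∞)` and
`∫₀^{t₀} p(t) σ((s/t,∞)) dt = ∫_s^∞ ℓ̃(u) du` for every `s > 0`. -/
theorem stmt_8 (t₀ : ℝ≥0∞) (ht₀ : 0 < t₀)
    (p : ℝ → ℝ)
    (hp_pos : ∀ u : ℝ, 0 < u → ENNReal.ofReal u < t₀ → 0 < p u)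
    (hp_dec : ∀ u v : ℝ, 0 < u → u ≤ v → ENNReal.ofReal v < t₀ → p v ≤ p u)
    (hp_int : ∫⁻ u in {u : ℝ | 0 < u ∧ ENNReal.ofReal u < t₀},
        ENNReal.ofReal ((1 + u ^ 2) * p u) < ⊤)
    (σ : Measure ℝ) (hσsupp : σ (Set.Ioi (0 : ℝ))ᶜ = 0)
    (hσfin : ∫⁻ r, ENNReal.ofReal (min (r ^ 2) 1) ∂σ < ⊤)
    (ℓ : ℝ → ℝ≥0∞)
    (hℓ : ∀ u : ℝ, ℓ u = ∫⁻ r in Set.Ioi ((ENNReal.ofReal u / t₀).toReal),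
        ENNReal.ofReal (p (u / r) * r⁻¹) ∂σ) :
    (∀ u v : ℝ, 0 < u → u ≤ v → ℓ v ≤ ℓ u) ∧
    (∀ s : ℝ, 0 < s →
      ∫⁻ t in {t : ℝ | 0 < t ∧ ENNReal.ofReal t < t₀},
          ENNReal.ofReal (p t) * σ (Set.Ioi (s / t)) =
        ∫⁻ u in Set.Ioi s, ℓ u) := by
  classical
  -- abbreviation for the lower endpoint of the radial integral
  set a : ℝ → ℝ := fun u => (ENNReal.ofReal u / t₀).toReal with ha_def
  have ha_nonneg : ∀ u, 0 ≤ a u := fun u => ENNReal.toReal_nonneg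
  -- key computation of `a u` when `t₀` is finite
  have ha_fin : ∀ u : ℝ, 0 ≤ u → t₀ ≠ ⊤ → a u = u / t₀.toReal := by
    intro u hu ht
    simp only [ha_def]
    rw [ENNReal.toReal_div, ENNReal.toReal_ofReal hu]
  -- `r > a u` implies `r > 0` (for `u > 0`)
  have ha_posr : ∀ u r : ℝ, 0 < u → a u < r → 0 < r := by
    intro u r hu hr
    by_cases ht : t₀ = ⊤
    · have : a u = 0 := by simp [ha_def, ht]
      linarith [this ▸ hr]
    · have h0 : 0 < t₀.toReal := ENNReal.toReal_pos ht₀.ne' ht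
      have : a u = u / t₀.toReal := ha_fin u hu.le ht
      have : 0 < a u := by rw [this]; positivity
      linarith
  -- the key equivalence `a u < r ↔ ofReal (u/r) < t₀` for positive `u, r`
  have hkey : ∀ u r : ℝ, 0 < u → 0 < r → (a u < r ↔ ENNReal.ofReal (u / r) < t₀) := by
    intro u r hu hr
    by_cases ht : t₀ = ⊤
    · have h1 : a u = 0 := by simp [ha_def, ht]
      simp [h1, hr, ht, ENNReal.ofReal_lt_top]
    · have h0 : 0 < t₀.toReal := ENNReal.toReal_pos ht₀.ne' ht
      rw [ha_fin u hu.le ht]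
      constructor
      · intro h
        have h2 : u / r < t₀.toReal := by
          rw [div_lt_iff₀ hr]
          calc u = (u / t₀.toReal) * t₀.toReal := by field_simp
          _ < r * t₀.toReal := by
            exact mul_lt_mul_of_pos_right h h0
          _ = t₀.toReal * r := mul_comm _ _
        calc ENNReal.ofReal (u / r) < ENNReal.ofReal t₀.toReal :=
              (ENNReal.ofReal_lt_ofReal_iff h0).mpr h2
          _ = t₀ := ENNReal.ofReal_toReal ht
      · intro h
        have h2 : u / r < t₀.toReal := by
          rw [← ENNReal.ofReal_toReal ht] at h
          by_contra hcon
          push_neg at hcon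
          exact absurd (ENNReal.ofReal_le_ofReal hcon) (not_le.mpr h)
        rw [div_lt_iff₀ h0]
        rw [div_lt_iff₀ hr] at h2
        linarith [h2]
  -- Part 1: monotonicity of ℓ
  have part1 : ∀ u v : ℝ, 0 < u → u ≤ v → ℓ v ≤ ℓ u := by
    intro u v hu huv
    have hv : 0 < v := lt_of_lt_of_le hu huv
    rw [hℓ u, hℓ v]
    have hsub : Set.Ioi (a v) ⊆ Set.Ioi (a u) := by
      apply Set.Ioi_subset_Ioi
      apply ENNReal.toReal_mono ((ENNReal.div_lt_top ENNReal.ofReal_ne_top ht₀.ne').ne)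
      exact ENNReal.div_le_div_right (ENNReal.ofReal_le_ofReal huv) t₀
    calc ∫⁻ r in Set.Ioi (a v), ENNReal.ofReal (p (v / r) * r⁻¹) ∂σ
        ≤ ∫⁻ r in Set.Ioi (a v), ENNReal.ofReal (p (u / r) * r⁻¹) ∂σ := by
          apply setLIntegral_mono' measurableSet_Ioi
          intro r hr
          have hr' : a v < r := hr
          have hrpos : 0 < r := ha_posr v r hv hr'
          have hlt : ENNReal.ofReal (v / r) < t₀ := (hkey v r hv hrpos).mp hr'
          have hple : p (v / r) ≤ p (u / r) :=
            hp_dec (u / r) (v / r) (div_pos hu hrpos)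
              (by gcongr) hlt
          exact ENNReal.ofReal_le_ofReal
            (mul_le_mul_of_nonneg_right hple (inv_nonneg.mpr hrpos.le))
      _ ≤ ∫⁻ r in Set.Ioi (a u), ENNReal.ofReal (p (u / r) * r⁻¹) ∂σ :=
          lintegral_mono_set hsub
  refine ⟨part1, ?_⟩
  intro s hs
  -- the set S
  set S : Set ℝ := {t : ℝ | 0 < t ∧ ENNReal.ofReal t < t₀} with hS_def
  have hSmeas : MeasurableSet S := by
    have : S = Set.Ioi 0 ∩ ENNReal.ofReal ⁻¹' (Set.Iio t₀) := by
      ext t; simp [hS_def, Set.mem_setOf_eq, and_comm]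
    rw [this]
    exact measurableSet_Ioi.inter (ENNReal.measurable_ofReal measurableSet_Iio)
  -- the antitone extension of `p`
  set qt : ℝ → ℝ≥0∞ := fun t =>
    if t ≤ 0 then ⊤ else if ENNReal.ofReal t < t₀ then ENNReal.ofReal (p t) else 0
    with hqt_def
  have hqt_anti : Antitone qt := by
    intro t t' htt'
    simp only [hqt_def]
    by_cases h1 : t ≤ 0
    · rw [if_pos h1]; exact le_top
    · push_neg at h1
      have h1' : ¬ t' ≤ 0 := by linarith
      rw [if_neg (not_le.mpr h1), if_neg h1']
      by_cases h2 : ENNReal.ofReal t' < t₀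
      · have h2' : ENNReal.ofReal t < t₀ :=
          lt_of_le_of_lt (ENNReal.ofReal_le_ofReal htt') h2
        rw [if_pos h2, if_pos h2']
        exact ENNReal.ofReal_le_ofReal (hp_dec t t' h1 htt' h2)
      · rw [if_neg h2]; exact zero_le
  -- the truncated kernel `q`
  set q : ℝ → ℝ≥0∞ := fun t =>
    if 0 < t ∧ ENNReal.ofReal t < t₀ then ENNReal.ofReal (p t) else 0 with hq_def
  have hqS : ∀ t : ℝ, 0 < t → ENNReal.ofReal t < t₀ → q t = ENNReal.ofReal (p t) := by
    intro t h1 h2; simp only [hq_def]; exact if_pos ⟨h1, h2⟩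
  have hq0 : ∀ t : ℝ, t ∉ S → q t = 0 := by
    intro t ht; simp only [hq_def]; exact if_neg ht
  have hq_ne_top : ∀ t, q t ≠ ⊤ := by
    intro t; simp only [hq_def]
    split_ifs
    · exact ENNReal.ofReal_ne_top
    · exact ENNReal.zero_ne_top
  have hq_eq : q = S.indicator qt := by
    funext t
    by_cases ht : t ∈ S
    · have ht' : 0 < t ∧ ENNReal.ofReal t < t₀ := ht
      rw [Set.indicator_of_mem ht, hqS t ht'.1 ht'.2]
      simp only [hqt_def]
      rw [if_neg (not_le.mpr ht'.1), if_pos ht'.2]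
    · rw [Set.indicator_of_notMem ht, hq0 t ht]
  have hq_meas : Measurable q := by
    rw [hq_eq]
    exact hqt_anti.measurable.indicator hSmeas
  -- the restricted measure σ'
  set σ' : Measure ℝ := σ.restrict (Set.Ioi 0) with hσ'_def
  have hσ'_eq : ∀ A : Set ℝ, MeasurableSet A → A ⊆ Set.Ioi 0 → σ' A = σ A := by
    intro A hA hsub
    rw [hσ'_def, Measure.restrict_apply hA, Set.inter_eq_left.mpr hsub]
  have hσfin' : ∀ c : ℝ, 0 < c → σ (Set.Ioi c) < ⊤ := by
    intro c hc
    have hpos : 0 < min (c ^ 2) 1 := lt_min (by positivity) one_pos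
    have h1 : ENNReal.ofReal (min (c ^ 2) 1) * σ (Set.Ioi c)
        ≤ ∫⁻ r, ENNReal.ofReal (min (r ^ 2) 1) ∂σ := by
      calc ENNReal.ofReal (min (c ^ 2) 1) * σ (Set.Ioi c)
          = ∫⁻ _ in Set.Ioi c, ENNReal.ofReal (min (c ^ 2) 1) ∂σ :=
            (setLIntegral_const _ _).symm
        _ ≤ ∫⁻ r in Set.Ioi c, ENNReal.ofReal (min (r ^ 2) 1) ∂σ := by
            apply setLIntegral_mono' measurableSet_Ioi
            intro r hr
            have hr' : c < r := hr
            have : c ^ 2 ≤ r ^ 2 := by nlinarith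
            exact ENNReal.ofReal_le_ofReal (min_le_min this le_rfl)
        _ ≤ ∫⁻ r, ENNReal.ofReal (min (r ^ 2) 1) ∂σ := setLIntegral_le_lintegral _ _
    by_contra hcon
    have htop : σ (Set.Ioi c) = ⊤ := by
      rw [← top_le_iff]; exact not_lt.mp hcon
    rw [htop, ENNReal.mul_top (ne_of_gt (ENNReal.ofReal_pos.mpr hpos))] at h1
    exact absurd (lt_of_le_of_lt h1 hσfin) (lt_irrefl ⊤)
  haveI hσ'sf : SigmaFinite σ' := by
    apply Measure.sigmaFinite_of_countable
      (Set.countable_range (fun n : ℕ => Set.Ioi ((n + 1 : ℝ)⁻¹) ∪ Set.Iic 0))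
    · rintro s ⟨n, rfl⟩
      have hc : (0 : ℝ) < (n + 1 : ℝ)⁻¹ := by positivity
      have h1 : σ' (Set.Ioi ((n + 1 : ℝ)⁻¹) ∪ Set.Iic 0)
          ≤ σ' (Set.Ioi ((n + 1 : ℝ)⁻¹)) + σ' (Set.Iic 0) := measure_union_le _ _
      have h2 : σ' (Set.Iic 0) = 0 := by
        rw [hσ'_def, Measure.restrict_apply measurableSet_Iic]
        have : Set.Iic (0 : ℝ) ∩ Set.Ioi 0 = ∅ := by
          ext x; simp only [Set.mem_inter_iff, Set.mem_Iic, Set.mem_Ioi,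
            Set.mem_empty_iff_false, iff_false, not_and, not_lt]
          intro h; exact h
        rw [this, measure_empty]
      have h3 : σ' (Set.Ioi ((n + 1 : ℝ)⁻¹)) < ⊤ := by
        rw [hσ'_def, Measure.restrict_apply measurableSet_Ioi]
        exact lt_of_le_of_lt (measure_mono Set.inter_subset_left) (hσfin' _ hc)
      calc σ' (Set.Ioi ((n + 1 : ℝ)⁻¹) ∪ Set.Iic 0)
          ≤ σ' (Set.Ioi ((n + 1 : ℝ)⁻¹)) + σ' (Set.Iic 0) := h1
        _ < ⊤ := by rw [h2, add_zero]; exact h3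
    · apply Set.eq_univ_of_forall
      intro x
      simp only [Set.mem_sUnion, Set.mem_range, exists_exists_eq_and, Set.mem_union,
        Set.mem_Ioi, Set.mem_Iic]
      by_cases hx : x ≤ 0
      · exact ⟨0, Or.inr hx⟩
      · push_neg at hx
        obtain ⟨n, hn⟩ := exists_nat_gt x⁻¹
        refine ⟨n, Or.inl ?_⟩
        have h1 : x⁻¹ < n + 1 := by linarith
        have h2 : (0:ℝ) < x⁻¹ := inv_pos.mpr hx
        calc (n + 1 : ℝ)⁻¹ < x⁻¹⁻¹ := by
              apply inv_strictAnti₀ h2 h1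
          _ = x := inv_inv x

  -- Step 1: rewrite the LHS as a double integral
  have step1 : ∫⁻ t in S, ENNReal.ofReal (p t) * σ (Set.Ioi (s / t))
      = ∫⁻ t in S, ∫⁻ r, q t * (Set.Ioi s).indicator 1 (t * r) ∂σ' := by
    apply setLIntegral_congr_fun hSmeas
    intro t ht
    have ht1 : 0 < t := ht.1
    have hind : ∀ r : ℝ, (Set.Ioi s).indicator (1 : ℝ → ℝ≥0∞) (t * r)
        = Set.indicator {r : ℝ | s < t * r} (fun _ => (1 : ℝ≥0∞)) r := by
      intro r
      by_cases h : s < t * r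
      · simp [Set.indicator_apply, Set.mem_setOf_eq, Set.mem_Ioi, h]
      · simp [Set.indicator_apply, Set.mem_setOf_eq, Set.mem_Ioi, h]
    have hsetm : MeasurableSet {r : ℝ | s < t * r} :=
      measurableSet_lt measurable_const (measurable_id.const_mul t)
    have hseteq : {r : ℝ | s < t * r} = Set.Ioi (s / t) := by
      ext r
      rw [Set.mem_setOf_eq, Set.mem_Ioi, div_lt_iff₀ ht1, mul_comm]
    calc ENNReal.ofReal (p t) * σ (Set.Ioi (s / t))
        = q t * σ' (Set.Ioi (s / t)) := by
          rw [hqS t ht1 ht.2, hσ'_eq _ measurableSet_Ioi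
            (Set.Ioi_subset_Ioi (div_pos hs ht1).le)]
      _ = q t * ∫⁻ r, Set.indicator {r : ℝ | s < t * r} (fun _ => (1 : ℝ≥0∞)) r ∂σ' := by
          rw [lintegral_indicator hsetm, setLIntegral_one, hseteq]
      _ = ∫⁻ r, q t * Set.indicator {r : ℝ | s < t * r} (fun _ => (1 : ℝ≥0∞)) r ∂σ' :=
          (lintegral_const_mul' _ _ (hq_ne_top t)).symm
      _ = ∫⁻ r, q t * (Set.Ioi s).indicator 1 (t * r) ∂σ' := by
          simp only [hind]
  -- measurability of the double integrand
  have hfmeas : Measurable (Function.uncurry fun t r : ℝ =>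
      q t * (Set.Ioi s).indicator (1 : ℝ → ℝ≥0∞) (t * r)) := by
    apply Measurable.mul
    · exact hq_meas.comp measurable_fst
    · exact (measurable_one.indicator measurableSet_Ioi).comp
        (measurable_fst.mul measurable_snd)
  -- Step 2: Fubini
  have step2 : ∫⁻ t in S, ∫⁻ r, q t * (Set.Ioi s).indicator 1 (t * r) ∂σ'
      = ∫⁻ r, (∫⁻ t in S, q t * (Set.Ioi s).indicator 1 (t * r)) ∂σ' :=
    lintegral_lintegral_swap hfmeas.aemeasurable
  -- Step 3: substitution in the inner integral
  have step3 : ∀ᵐ r ∂σ', (∫⁻ t in S, q t * (Set.Ioi s).indicator 1 (t * r))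
      = ∫⁻ u in Set.Ioi s, q (u / r) * ENNReal.ofReal r⁻¹ := by
    filter_upwards [ae_restrict_mem measurableSet_Ioi] with r hr
    have hrpos : 0 < r := hr
    have hmh : Measurable (fun t : ℝ => q t * (Set.Ioi s).indicator (1:ℝ→ℝ≥0∞) (t * r)) :=
      hq_meas.mul ((measurable_one.indicator measurableSet_Ioi).comp
        (measurable_id.mul_const r))
    have e1 : ∫⁻ t in S, q t * (Set.Ioi s).indicator 1 (t * r)
        = ∫⁻ t, q t * (Set.Ioi s).indicator 1 (t * r) := by
      rw [← lintegral_indicator hSmeas]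
      congr 1
      funext t
      by_cases ht : t ∈ S
      · rw [Set.indicator_of_mem ht]
      · rw [Set.indicator_of_notMem ht, hq0 t ht, zero_mul]
    have hmap := Real.map_volume_mul_left (inv_ne_zero hrpos.ne')
    have e2 : ∫⁻ u, (fun t : ℝ => q t * (Set.Ioi s).indicator 1 (t * r)) (r⁻¹ * u)
        = ENNReal.ofReal r * ∫⁻ t, q t * (Set.Ioi s).indicator 1 (t * r) := by
      calc ∫⁻ u, (fun t : ℝ => q t * (Set.Ioi s).indicator 1 (t * r)) (r⁻¹ * u)
          = ∫⁻ x, (fun t : ℝ => q t * (Set.Ioi s).indicator 1 (t * r)) x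
              ∂(Measure.map (r⁻¹ * ·) volume) :=
            (lintegral_map hmh (measurable_id.const_mul r⁻¹)).symm
        _ = ENNReal.ofReal r * ∫⁻ t, q t * (Set.Ioi s).indicator 1 (t * r) := by
            rw [hmap, lintegral_smul_measure, inv_inv, abs_of_pos hrpos, smul_eq_mul]
    have e3 : ∀ u : ℝ, (fun t : ℝ => q t * (Set.Ioi s).indicator 1 (t * r)) (r⁻¹ * u)
        = (Set.Ioi s).indicator (fun u => q (u / r)) u := by
      intro u
      have h2 : r⁻¹ * u = u / r := by
        rw [div_eq_mul_inv, mul_comm]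
      have h1 : u / r * r = u := by field_simp
      simp only [h2, h1]
      by_cases hu : u ∈ Set.Ioi s
      · rw [Set.indicator_of_mem hu, Set.indicator_of_mem hu]
        simp
      · rw [Set.indicator_of_notMem hu, Set.indicator_of_notMem hu, mul_zero]
    have e4 : ∫⁻ u, (Set.Ioi s).indicator (fun u => q (u / r)) u
        = ENNReal.ofReal r * ∫⁻ t, q t * (Set.Ioi s).indicator 1 (t * r) := by
      rw [← e2]
      exact lintegral_congr fun u => (e3 u).symm
    calc ∫⁻ t in S, q t * (Set.Ioi s).indicator 1 (t * r)
        = ∫⁻ t, q t * (Set.Ioi s).indicator 1 (t * r) := e1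
      _ = ENNReal.ofReal r⁻¹ * ENNReal.ofReal r
            * ∫⁻ t, q t * (Set.Ioi s).indicator 1 (t * r) := by
          rw [← ENNReal.ofReal_mul (inv_nonneg.mpr hrpos.le),
            inv_mul_cancel₀ hrpos.ne', ENNReal.ofReal_one, one_mul]
      _ = ENNReal.ofReal r⁻¹ * ∫⁻ u, (Set.Ioi s).indicator (fun u => q (u / r)) u := by
          rw [mul_assoc, ← e4]
      _ = ENNReal.ofReal r⁻¹ * ∫⁻ u in Set.Ioi s, q (u / r) := by
          rw [lintegral_indicator measurableSet_Ioi]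
      _ = ∫⁻ u in Set.Ioi s, q (u / r) * ENNReal.ofReal r⁻¹ := by
          rw [lintegral_mul_const' _ _ ENNReal.ofReal_ne_top, mul_comm]
  -- Step 4: Fubini back
  have hkmeas : Measurable (Function.uncurry fun r u : ℝ =>
      q (u / r) * ENNReal.ofReal r⁻¹) := by
    apply Measurable.mul
    · exact hq_meas.comp (measurable_snd.div measurable_fst)
    · exact ENNReal.measurable_ofReal.comp measurable_fst.inv
  have step4 : ∫⁻ r, (∫⁻ u in Set.Ioi s, q (u / r) * ENNReal.ofReal r⁻¹) ∂σ'
      = ∫⁻ u in Set.Ioi s, (∫⁻ r, q (u / r) * ENNReal.ofReal r⁻¹ ∂σ') :=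
    lintegral_lintegral_swap hkmeas.aemeasurable
  -- Step 5: identify the inner integral with ℓ
  have hq_ind : ∀ u : ℝ, 0 < u →
      (fun r : ℝ => q (u / r) * ENNReal.ofReal r⁻¹)
        = (Set.Ioi (a u)).indicator (fun r => ENNReal.ofReal (p (u / r) * r⁻¹)) := by
    intro u hu
    funext r
    by_cases hr : a u < r
    · have hrpos : 0 < r := ha_posr u r hu hr
      have hlt : ENNReal.ofReal (u / r) < t₀ := (hkey u r hu hrpos).mp hr
      rw [Set.indicator_of_mem (Set.mem_Ioi.mpr hr), hqS _ (div_pos hu hrpos) hlt,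
        ← ENNReal.ofReal_mul (hp_pos _ (div_pos hu hrpos) hlt).le]
    · rw [Set.indicator_of_notMem (by simpa using hr)]
      have hz : q (u / r) = 0 := by
        apply hq0
        rcases lt_trichotomy r 0 with h | h | h
        · intro hc
          exact (lt_asymm (div_neg_of_pos_of_neg hu h)) hc.1
        · intro hc
          rw [h, div_zero] at hc
          exact lt_irrefl 0 hc.1
        · intro hc
          exact hr ((hkey u r hu h).mpr hc.2)
      rw [hz, zero_mul]
  have step5 : ∫⁻ u in Set.Ioi s, (∫⁻ r, q (u / r) * ENNReal.ofReal r⁻¹ ∂σ')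
      = ∫⁻ u in Set.Ioi s, ℓ u := by
    apply setLIntegral_congr_fun measurableSet_Ioi
    intro u hu
    have hupos : 0 < u := hs.trans hu
    beta_reduce
    rw [hℓ u, hq_ind u hupos, lintegral_indicator measurableSet_Ioi]
    congr 1
    rw [hσ'_def, Measure.restrict_restrict measurableSet_Ioi,
      Set.inter_eq_left.mpr (Set.Ioi_subset_Ioi (ha_nonneg u))]
  calc ∫⁻ t in S, ENNReal.ofReal (p t) * σ (Set.Ioi (s / t))
      = ∫⁻ t in S, ∫⁻ r, q t * (Set.Ioi s).indicator 1 (t * r) ∂σ' := step1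
    _ = ∫⁻ r, (∫⁻ t in S, q t * (Set.Ioi s).indicator 1 (t * r)) ∂σ' := step2
    _ = ∫⁻ r, (∫⁻ u in Set.Ioi s, q (u / r) * ENNReal.ofReal r⁻¹) ∂σ' :=
        lintegral_congr_ae step3
    _ = ∫⁻ u in Set.Ioi s, (∫⁻ r, q (u / r) * ENNReal.ofReal r⁻¹ ∂σ') := step4
    _ = ∫⁻ u in Set.Ioi s, ℓ u := step5
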